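/- Let G and H be connected graphs, each with at least two vertices, of order n₁ and n₂, where G has t₁ true twin equivalence classes. If dim_l(G) = n₁ − t₁ and H is bipartite, then n₂(n₁ − t₁) ≤ dim_l(G ⊠ H) ≤ n₂(n₁ − t₁) + t₁. -/

import Mathlib

open SimpleGraph

/-- The strong product of two simple graphs. -/
def strongProd {α β : Type*} (G : SimpleGraph α) (H : SimpleGraph β) :
    SimpleGraph (α × β) where
  Adj x y := (x.1 = y.1 ∧ H.Adj x.2 y.2) ∨ (x.2 = y.2 ∧ G.Adj x.1 y.1) ∨
      (G.Adj x.1 y.1 ∧ H.Adj x.2 y.2)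
  symm := by
    constructor
    rintro x y (⟨h1, h2⟩ | ⟨h1, h2⟩ | ⟨h1, h2⟩)
    · exact Or.inl ⟨h1.symm, h2.symm⟩
    · exact Or.inr (Or.inl ⟨h1.symm, h2.symm⟩)
    · exact Or.inr (Or.inr ⟨h1.symm, h2.symm⟩)
  loopless := by
    constructor
    rintro x (⟨_, h⟩ | ⟨_, h⟩ | ⟨h, _⟩)
    · exact H.irrefl h
    · exact G.irrefl h
    · exact G.irrefl h

/-- A set `S` is a local metric generator for `G` if every pair of adjacent
vertices is distinguished by some element of `S`. -/
def IsLocalMetricGenerator {α : Type*} (G : SimpleGraph α) (S : Set α) : Prop :=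
  ∀ u v : α, G.Adj u v → ∃ s ∈ S, G.dist u s ≠ G.dist v s

/-- The local metric dimension of a graph. -/
noncomputable def localMetricDim {α : Type*} [Fintype α] (G : SimpleGraph α) : ℕ :=
  sInf {n | ∃ S : Finset α, S.card = n ∧ IsLocalMetricGenerator G ↑S}

/-- A set `S` is a metric generator for `G` if every pair of distinct
vertices is distinguished by some element of `S`. -/
def IsMetricGenerator {α : Type*} (G : SimpleGraph α) (S : Set α) : Prop :=
  ∀ u v : α, u ≠ v → ∃ s ∈ S, G.dist u s ≠ G.dist v s

/-- The metric dimension of a graph. -/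
noncomputable def metricDim {α : Type*} [Fintype α] (G : SimpleGraph α) : ℕ :=
  sInf {n | ∃ S : Finset α, S.card = n ∧ IsMetricGenerator G ↑S}

/-- The eccentricity of a vertex: the maximum distance to another vertex. -/
noncomputable def eccentricity {α : Type*} (G : SimpleGraph α) (v : α) : ℕ :=
  sSup {d | ∃ u, G.dist v u = d}

/-- The diameter of a graph: maximum eccentricity. -/
noncomputable def graphDiam {α : Type*} (G : SimpleGraph α) : ℕ :=
  sSup {d | ∃ v, eccentricity G v = d}

/-- The radius of a graph: minimum eccentricity. -/
noncomputable def graphRadius {α : Type*} (G : SimpleGraph α) : ℕ :=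
  sInf {d | ∃ v, eccentricity G v = d}

/-- The interval `I[x,y]`: vertices lying on some shortest `x`–`y` path. -/
def interval {α : Type*} (G : SimpleGraph α) (x y : α) : Set α :=
  {w | G.dist x w + G.dist w y = G.dist x y}

/-- A graph is adjacency `k`-resolved if for every pair of adjacent vertices
`x, y` there is a vertex `w` with `d(y,w) ≥ k` and `x ∈ I[y,w]`, or
`d(x,w) ≥ k` and `y ∈ I[x,w]`. -/
def AdjKResolved {α : Type*} (G : SimpleGraph α) (k : ℕ) : Prop :=
  ∀ x y : α, G.Adj x y →
    ∃ w : α, (k ≤ G.dist y w ∧ x ∈ interval G y w) ∨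
      (k ≤ G.dist x w ∧ y ∈ interval G x w)

/-- The true twin equivalence relation: `u ≈ v` iff `N[u] = N[v]`. -/
def trueTwinSetoid {α : Type*} (G : SimpleGraph α) : Setoid α where
  r u v := insert u (G.neighborSet u) = insert v (G.neighborSet v)
  iseqv := ⟨fun _ => rfl, Eq.symm, Eq.trans⟩


section StmtSevenAux

variable {α β : Type*} {G : SimpleGraph α} {H : SimpleGraph β}

/-- first-coordinate embedding hom -/
def homFst (G : SimpleGraph α) (H : SimpleGraph β) (b : β) : G →g strongProd G H where
  toFun a := (a, b)
  map_rel' h := Or.inr (Or.inl ⟨rfl, h⟩)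

def homSnd (G : SimpleGraph α) (H : SimpleGraph β) (a : α) : H →g strongProd G H where
  toFun b := (a, b)
  map_rel' h := Or.inl ⟨rfl, h⟩

lemma exists_prodWalk : ∀ {a x : α} (w₁ : G.Walk a x) {b y : β} (w₂ : H.Walk b y),
    ∃ w : (strongProd G H).Walk (a, b) (x, y), w.length = max w₁.length w₂.length := by
  intro a x w₁
  induction w₁ with
  | nil =>
    intro b y w₂
    exact ⟨w₂.map (homSnd G H _), Walk.length_map _ _⟩
  | @cons u v x h w ih =>
    intro b y w₂
    cases w₂ with
    | nil =>
      exact ⟨(Walk.cons h w).map (homFst G H _), (Walk.length_map _ _).trans (by simp)⟩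
    | @cons b c y h₂ w₂' =>
      obtain ⟨w', hw'⟩ := ih w₂'
      refine ⟨Walk.cons (Or.inr (Or.inr ⟨h, h₂⟩)) w', ?_⟩
      show w'.length + 1 = _
      simp [hw', Nat.succ_max_succ]

lemma proj_fst_walk : ∀ {p q : α × β} (w : (strongProd G H).Walk p q),
    ∃ w₁ : G.Walk p.1 q.1, w₁.length ≤ w.length := by
  intro p q w
  induction w with
  | nil => exact ⟨Walk.nil, by simp⟩
  | @cons p r q h w ih =>
    obtain ⟨w₁, hw₁⟩ := ih
    rcases h with ⟨h1, _⟩ | ⟨_, h1⟩ | ⟨h1, _⟩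
    · exact ⟨w₁.copy h1.symm rfl, by simp only [Walk.length_copy]; exact Nat.le_succ_of_le hw₁⟩
    · exact ⟨Walk.cons h1 w₁, Nat.succ_le_succ hw₁⟩
    · exact ⟨Walk.cons h1 w₁, Nat.succ_le_succ hw₁⟩

lemma proj_snd_walk : ∀ {p q : α × β} (w : (strongProd G H).Walk p q),
    ∃ w₂ : H.Walk p.2 q.2, w₂.length ≤ w.length := by
  intro p q w
  induction w with
  | nil => exact ⟨Walk.nil, by simp⟩
  | @cons p r q h w ih =>
    obtain ⟨w₂, hw₂⟩ := ih
    rcases h with ⟨_, h2⟩ | ⟨h2, _⟩ | ⟨_, h2⟩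
    · exact ⟨Walk.cons h2 w₂, Nat.succ_le_succ hw₂⟩
    · exact ⟨w₂.copy h2.symm rfl, by simp only [Walk.length_copy]; exact Nat.le_succ_of_le hw₂⟩
    · exact ⟨Walk.cons h2 w₂, Nat.succ_le_succ hw₂⟩

lemma strongProd_reachable {a x : α} {b y : β} (h1 : G.Reachable a x) (h2 : H.Reachable b y) :
    (strongProd G H).Reachable (a, b) (x, y) := by
  obtain ⟨w₁⟩ := h1
  obtain ⟨w₂⟩ := h2
  obtain ⟨w, -⟩ := exists_prodWalk w₁ w₂
  exact ⟨w⟩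

lemma strongProd_dist {a x : α} {b y : β} (h1 : G.Reachable a x) (h2 : H.Reachable b y) :
    (strongProd G H).dist (a, b) (x, y) = max (G.dist a x) (H.dist b y) := by
  apply le_antisymm
  · obtain ⟨w₁, hw₁⟩ := h1.exists_walk_length_eq_dist
    obtain ⟨w₂, hw₂⟩ := h2.exists_walk_length_eq_dist
    obtain ⟨w, hw⟩ := exists_prodWalk w₁ w₂
    calc (strongProd G H).dist (a, b) (x, y) ≤ w.length := dist_le w
      _ = _ := by rw [hw, hw₁, hw₂]
  · obtain ⟨w, hw⟩ := (strongProd_reachable h1 h2).exists_walk_length_eq_dist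
    obtain ⟨w₁, hw₁⟩ := proj_fst_walk w
    obtain ⟨w₂, hw₂⟩ := proj_snd_walk w
    exact max_le (le_trans (dist_le w₁) (hw ▸ hw₁)) (le_trans (dist_le w₂) (hw ▸ hw₂))

/-- adjacent true twins: distance to any third vertex agrees. -/
lemma twin_dist_le {G : SimpleGraph α} {u v s : α}
    (h : insert u (G.neighborSet u) = insert v (G.neighborSet v))
    (hsu : s ≠ u) (hr : G.Reachable u s) : G.dist v s ≤ G.dist u s := by
  obtain ⟨w, hw⟩ := hr.exists_walk_length_eq_dist
  cases w with
  | nil => exact absurd rfl hsu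
  | @cons _ x _ h' w' =>
    by_cases hxv : x = v
    · subst hxv
      have h2 := dist_le w'
      simp only [Walk.length_cons] at hw
      omega
    · have hx : x ∈ insert v (G.neighborSet v) := by
        rw [← h]; exact Set.mem_insert_of_mem _ h'
      have hadj : G.Adj v x := by
        rcases hx with hx | hx
        · exact absurd hx hxv
        · exact hx
      have h2 := dist_le (Walk.cons hadj w')
      simp only [Walk.length_cons] at hw h2
      omega

lemma twin_dist {G : SimpleGraph α} {u v s : α}
    (h : insert u (G.neighborSet u) = insert v (G.neighborSet v))
    (hsu : s ≠ u) (hsv : s ≠ v) (hr : G.Reachable u s) : G.dist u s = G.dist v s := by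
  by_cases huv : u = v
  · rw [huv]
  · have hadj : G.Adj v u := by
      have : u ∈ insert v (G.neighborSet v) := by rw [← h]; exact Set.mem_insert _ _
      rcases this with h' | h'
      · exact absurd h' huv
      · exact h'
    have hr' : G.Reachable v s := hadj.reachable.trans hr
    exact le_antisymm (twin_dist_le h.symm hsv hr') (twin_dist_le h hsu hr)

/-- closed neighborhoods in the strong product -/
lemma strongProd_closedNbhd (a : α) (b : β) :
    insert (a, b) ((strongProd G H).neighborSet (a, b)) =
      (insert a (G.neighborSet a)) ×ˢ (insert b (H.neighborSet b)) := by
  ext ⟨x, y⟩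
  simp only [Set.mem_insert_iff, mem_neighborSet, Set.mem_prod, Prod.mk.injEq]
  constructor
  · rintro (⟨rfl, rfl⟩ | ⟨rfl, h2⟩ | ⟨rfl, h1⟩ | ⟨h1, h2⟩)
    · exact ⟨Or.inl rfl, Or.inl rfl⟩
    · exact ⟨Or.inl rfl, Or.inr h2⟩
    · exact ⟨Or.inr h1, Or.inl rfl⟩
    · exact ⟨Or.inr h1, Or.inr h2⟩
  · rintro ⟨rfl | h1, rfl | h2⟩
    · exact Or.inl ⟨rfl, rfl⟩
    · exact Or.inr (Or.inl ⟨rfl, h2⟩)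
    · exact Or.inr (Or.inr (Or.inl ⟨rfl, h1⟩))
    · exact Or.inr (Or.inr (Or.inr ⟨h1, h2⟩))



lemma walk_parity (C : H.Coloring (Fin 2)) :
    ∀ {b y : β} (w : H.Walk b y), Even w.length ↔ C b = C y := by
  intro b y w
  induction w with
  | nil => simp
  | @cons b c y h w ih =>
    have hbc : C b ≠ C c := C.valid h
    simp only [Walk.length_cons, Nat.even_add_one, ih]
    have h1 := (C b).isLt
    have h2 := (C c).isLt
    have h3 := (C y).isLt
    constructor
    · intro hne
      have : ¬ (C c).val = (C y).val := fun hh => hne (Fin.ext hh)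
      have : (C b).val = (C y).val := by
        have hbc' : ¬ (C b).val = (C c).val := fun hh => hbc (Fin.ext hh)
        omega
      exact Fin.ext this
    · intro he hco
      exact hbc (he.trans hco.symm)

lemma bipartite_adj_dist_ne (hcol : H.Colorable 2) {b d y : β} (hadj : H.Adj b d)
    (hr : H.Reachable b y) : H.dist b y ≠ H.dist d y := by
  obtain ⟨C⟩ := hcol
  obtain ⟨w₁, hw₁⟩ := hr.exists_walk_length_eq_dist
  obtain ⟨w₂, hw₂⟩ := (hadj.symm.reachable.trans hr).exists_walk_length_eq_dist
  intro heq
  have p1 := walk_parity C w₁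
  have p2 := walk_parity C w₂
  rw [hw₁] at p1
  rw [hw₂, ← heq] at p2
  have hbd : C b ≠ C d := C.valid hadj
  have h1 := (C b).isLt
  have h2 := (C d).isLt
  have h3 := (C y).isLt
  have hbd' : ¬ (C b).val = (C d).val := fun hh => hbd (Fin.ext hh)
  by_cases he : Even (H.dist b y)
  · have e1 : C b = C y := p1.mp he
    have e2 : C d = C y := p2.mp he
    exact hbd (e1.trans e2.symm)
  · have e1 : ¬ C b = C y := fun hh => he (p1.mpr hh)
    have e2 : ¬ C d = C y := fun hh => he (p2.mpr hh)
    have e1' : ¬ (C b).val = (C y).val := fun hh => e1 (Fin.ext hh)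
    have e2' : ¬ (C d).val = (C y).val := fun hh => e2 (Fin.ext hh)
    omega

/-- the universal set is always a local metric generator -/
lemma univ_gen (G : SimpleGraph α) : IsLocalMetricGenerator G Set.univ := by
  intro u v huv
  exact ⟨u, Set.mem_univ _, by
    rw [dist_self, dist_comm, dist_eq_one_iff_adj.mpr huv]; omega⟩

lemma localMetricDim_set_nonempty (G : SimpleGraph α) [Fintype α] :
    {n | ∃ S : Finset α, S.card = n ∧ IsLocalMetricGenerator G ↑S}.Nonempty := by
  refine ⟨(Finset.univ : Finset α).card, Finset.univ, rfl, ?_⟩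
  simpa using univ_gen G

lemma localMetricDim_le [Fintype α] {S : Finset α} (hS : IsLocalMetricGenerator G ↑S) :
    localMetricDim G ≤ S.card :=
  Nat.sInf_le ⟨S, rfl, hS⟩

lemma le_localMetricDim [Fintype α] {n : ℕ}
    (hn : ∀ S : Finset α, IsLocalMetricGenerator G ↑S → n ≤ S.card) :
    n ≤ localMetricDim G := by
  apply le_csInf (localMetricDim_set_nonempty G)
  rintro m ⟨S, rfl, hS⟩
  exact hn S hS



lemma myDistAdjLe {G : SimpleGraph α} {u v s : α} (h : G.Adj u v)
    (hr : G.Reachable v s) : G.dist u s ≤ G.dist v s + 1 := by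
  obtain ⟨w, hw⟩ := hr.exists_walk_length_eq_dist
  have := dist_le (Walk.cons h w)
  simp only [Walk.length_cons] at this
  omega

end StmtSevenAux

/-- if `dim_l(G) = n₁ − t₁` and `H` is bipartite, then
`n₂(n₁ − t₁) ≤ dim_l(G ⊠ H) ≤ n₂(n₁ − t₁) + t₁`. -/
theorem stmt7 {α β : Type*} [Fintype α] [Fintype β]
    (G : SimpleGraph α) (H : SimpleGraph β)
    (hG : G.Connected) (hH : H.Connected)
    (hn1 : 2 ≤ Fintype.card α) (hn2 : 2 ≤ Fintype.card β)
    (t1 : ℕ) (ht1 : Nat.card (Quotient (trueTwinSetoid G)) = t1)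
    (hdimG : localMetricDim G = Fintype.card α - t1)
    (hbip : H.Colorable 2) :
    Fintype.card β * (Fintype.card α - t1) ≤ localMetricDim (strongProd G H) ∧
      localMetricDim (strongProd G H) ≤ Fintype.card β * (Fintype.card α - t1) + t1 := by
  classical
  have hα : Nonempty α := Fintype.card_pos_iff.mp (by omega)
  have hβ : Nonempty β := Fintype.card_pos_iff.mp (by omega)
  have ht1n : t1 ≤ Fintype.card α := by
    rw [← ht1, ← Nat.card_eq_fintype_card]
    exact Nat.card_le_card_of_surjective _ Quotient.mk_surjective
  constructor
  · -- lower bound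
    apply le_localMetricDim
    intro S hS
    -- injectivity of the class map on the complement of S
    set f : α × β → Quotient (trueTwinSetoid G) × β :=
      fun p => (Quotient.mk (trueTwinSetoid G) p.1, p.2) with hf
    have hinj : Function.Injective (fun p : {p : α × β // p ∈ Sᶜ} => f p.val) := by
      rintro ⟨⟨x, y⟩, hp⟩ ⟨⟨x', y'⟩, hq⟩ heq
      simp only [hf, Prod.mk.injEq] at heq
      obtain ⟨hq1, rfl⟩ := heq
      have hrel : insert x (G.neighborSet x) = insert x' (G.neighborSet x') :=
        Quotient.exact hq1
      by_cases hxx : x = x'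
      · exact Subtype.ext (by simp [hxx])
      · exfalso
        have hadj : G.Adj x x' := by
          have : x ∈ insert x' (G.neighborSet x') := by
            rw [← hrel]; exact Set.mem_insert _ _
          rcases this with h | h
          · exact absurd h hxx
          · exact h.symm
        have hadjP : (strongProd G H).Adj (x, y) (x', y) := Or.inr (Or.inl ⟨rfl, hadj⟩)
        obtain ⟨⟨s1, s2⟩, hsS, hsne⟩ := hS _ _ hadjP
        have htw : insert ((x : α), y) ((strongProd G H).neighborSet (x, y)) =
            insert (x', y) ((strongProd G H).neighborSet (x', y)) := by
          rw [strongProd_closedNbhd, strongProd_closedNbhd, hrel]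
        have hs1 : (s1, s2) ≠ ((x : α), y) := by
          intro he; rw [he] at hsS; exact (Finset.mem_compl.mp hp) hsS
        have hs2 : (s1, s2) ≠ ((x' : α), y) := by
          intro he; rw [he] at hsS; exact (Finset.mem_compl.mp hq) hsS
        exact hsne (twin_dist htw hs1 hs2
          (strongProd_reachable (hG.preconnected x s1) (hH.preconnected y s2)))
    have hcard1 : (Sᶜ : Finset (α × β)).card ≤ t1 * Fintype.card β := by
      have h1 : Nat.card {p : α × β // p ∈ Sᶜ} ≤
          Nat.card (Quotient (trueTwinSetoid G) × β) :=
        Nat.card_le_card_of_injective _ hinj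
      rwa [Nat.card_prod, ht1, Nat.card_eq_fintype_card (α := β),
        Nat.card_eq_finsetCard] at h1
    have hcard2 : S.card + (Sᶜ : Finset (α × β)).card = Fintype.card α * Fintype.card β := by
      rw [Finset.card_add_card_compl, Fintype.card_prod]
    have hmul : Fintype.card β * (Fintype.card α - t1) + Fintype.card β * t1 =
        Fintype.card α * Fintype.card β := by
      rw [← Nat.mul_add, Nat.sub_add_cancel ht1n, Nat.mul_comm]
    have hcomm : Fintype.card β * t1 = t1 * Fintype.card β := Nat.mul_comm _ _
    omega
  · -- upper bound
    have hmem : localMetricDim G ∈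
        {n | ∃ S : Finset α, S.card = n ∧ IsLocalMetricGenerator G ↑S} :=
      Nat.sInf_mem (localMetricDim_set_nonempty G)
    rw [hdimG] at hmem
    obtain ⟨B, hBcard, hBgen⟩ := hmem
    obtain ⟨h₀⟩ := hβ
    set S : Finset (α × β) := B ×ˢ Finset.univ ∪ Bᶜ ×ˢ {h₀} with hSdef
    have hdisj : Disjoint (B ×ˢ (Finset.univ : Finset β)) (Bᶜ ×ˢ {h₀}) := by
      rw [Finset.disjoint_left]
      rintro ⟨p1, p2⟩ hp hq
      rw [Finset.mem_product] at hp hq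
      exact (Finset.mem_compl.mp hq.1) hp.1
    have hScard : S.card = Fintype.card β * (Fintype.card α - t1) + t1 := by
      rw [hSdef, Finset.card_union_of_disjoint hdisj, Finset.card_product,
        Finset.card_product, Finset.card_univ, Finset.card_compl, hBcard,
        Finset.card_singleton]
      have : Fintype.card α - (Fintype.card α - t1) = t1 := by omega
      rw [this, Nat.mul_one, Nat.mul_comm]
    have hgen : IsLocalMetricGenerator (strongProd G H) ↑S := by
      rintro ⟨a, b⟩ ⟨c, d⟩ hadj
      rcases hadj with ⟨h1, h2⟩ | ⟨h1, h2⟩ | ⟨h1, h2⟩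
      · -- a = c, H.Adj b d
        dsimp only at h1 h2
        subst h1
        refine ⟨(a, h₀), ?_, ?_⟩
        · rw [Finset.mem_coe, hSdef, Finset.mem_union]
          by_cases haB : a ∈ B
          · exact Or.inl (Finset.mem_product.mpr ⟨haB, Finset.mem_univ _⟩)
          · exact Or.inr (Finset.mem_product.mpr
              ⟨Finset.mem_compl.mpr haB, Finset.mem_singleton_self _⟩)
        · rw [strongProd_dist (Reachable.refl a) (hH.preconnected b h₀),
            strongProd_dist (Reachable.refl a) (hH.preconnected d h₀),
            SimpleGraph.dist_self, Nat.zero_max, Nat.zero_max]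
          exact bipartite_adj_dist_ne hbip h2 (hH.preconnected b h₀)
      · -- b = d, G.Adj a c
        dsimp only at h1 h2
        subst h1
        obtain ⟨x, hxB, hxne⟩ := hBgen a c h2
        refine ⟨(x, b), ?_, ?_⟩
        · rw [Finset.mem_coe, hSdef, Finset.mem_union]
          exact Or.inl (Finset.mem_product.mpr ⟨hxB, Finset.mem_univ _⟩)
        · rw [strongProd_dist (hG.preconnected a x) (hH.preconnected b b),
            strongProd_dist (hG.preconnected c x) (hH.preconnected b b),
            SimpleGraph.dist_self, Nat.max_zero, Nat.max_zero]
          exact hxne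
      · -- G.Adj a c, H.Adj b d
        dsimp only at h1 h2
        obtain ⟨x, hxB, hxne⟩ := hBgen a c h1
        have hd1 : G.dist c x ≤ G.dist a x + 1 := myDistAdjLe h1.symm (hG.preconnected a x)
        have hd2 : G.dist a x ≤ G.dist c x + 1 := myDistAdjLe h1 (hG.preconnected c x)
        have hbd : H.dist b d = 1 := dist_eq_one_iff_adj.mpr h2
        have hdb : H.dist d b = 1 := dist_eq_one_iff_adj.mpr h2.symm
        rcases Nat.lt_or_ge (G.dist a x) (G.dist c x) with hlt | hge
        · refine ⟨(x, b), ?_, ?_⟩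
          · rw [Finset.mem_coe, hSdef, Finset.mem_union]
            exact Or.inl (Finset.mem_product.mpr ⟨hxB, Finset.mem_univ _⟩)
          · rw [strongProd_dist (hG.preconnected a x) (hH.preconnected b b),
              strongProd_dist (hG.preconnected c x) (hH.preconnected d b),
              SimpleGraph.dist_self, Nat.max_zero, hdb]
            omega
        · have hlt : G.dist c x < G.dist a x := by omega
          refine ⟨(x, d), ?_, ?_⟩
          · rw [Finset.mem_coe, hSdef, Finset.mem_union]
            exact Or.inl (Finset.mem_product.mpr ⟨hxB, Finset.mem_univ _⟩)
          · rw [strongProd_dist (hG.preconnected a x) (hH.preconnected b d),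
              strongProd_dist (hG.preconnected c x) (hH.preconnected d d),
              SimpleGraph.dist_self, Nat.max_zero, hbd]
            omega
    calc localMetricDim (strongProd G H) ≤ S.card := localMetricDim_le hgen
      _ = _ := hScard
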